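/- The Choi–Lam quartic q(w,x,y,z) = w^4 + x^2y^2 + y^2z^2 + z^2x^2 - 4wxyz is not a sum of squares of real quadratic forms. -/

import Mathlib

open MvPolynomial

private lemma key_pow (a b c d : ℕ) (h : a + b + c + d = 2) :
    4 * ((1:ℝ)^a * 0^b * 0^c * 0^d
       + 0^a * 1^b * 0^c * 0^d
       + 0^a * 0^b * 1^c * 0^d
       + 0^a * 0^b * 0^c * 1^d)
    = 1^a*1^b*1^c*1^d
      + 1^a*1^b*(-1)^c*(-1)^d
      + 1^a*(-1)^b*1^c*(-1)^d
      + 1^a*(-1)^b*(-1)^c*1^d := by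
  have ha : a ≤ 2 := by omega
  interval_cases a <;>
  · have hb : b ≤ 2 := by omega
    interval_cases b <;>
    · have hc : c ≤ 2 := by omega
      interval_cases c <;>
      · have hd : d ≤ 2 := by omega
        interval_cases d <;> first | omega | norm_num

private lemma eval_identity (p : MvPolynomial (Fin 4) ℝ) (hp : p.IsHomogeneous 2) :
    4 * (eval ![1,0,0,0] p + eval ![0,1,0,0] p + eval ![0,0,1,0] p + eval ![0,0,0,1] p)
    = eval ![1,1,1,1] p + eval ![1,1,-1,-1] p + eval ![1,-1,1,-1] p + eval ![1,-1,-1,1] p := by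
  simp only [eval_eq']
  rw [← Finset.sum_add_distrib, ← Finset.sum_add_distrib, ← Finset.sum_add_distrib,
      Finset.mul_sum, ← Finset.sum_add_distrib, ← Finset.sum_add_distrib,
      ← Finset.sum_add_distrib]
  refine Finset.sum_congr rfl fun d hd => ?_
  have h2 : Finsupp.weight 1 d = 2 := hp (mem_support_iff.mp hd)
  have hdeg : d 0 + d 1 + d 2 + d 3 = 2 := by
    rw [Finsupp.weight_apply, Finsupp.sum_fintype] at h2
    · simpa [Fin.sum_univ_four] using h2
    · intro i; simp
  have key := key_pow (d 0) (d 1) (d 2) (d 3) hdeg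
  simp only [Fin.prod_univ_four, Matrix.cons_val_zero, Matrix.cons_val_one, Matrix.head_cons,
    Matrix.cons_val_two, Matrix.tail_cons, Matrix.cons_val_three]
  linear_combination (coeff d p) * key
theorem choi_lam_quartic_not_sos :
    ¬ ∃ (r : ℕ) (p : Fin r → MvPolynomial (Fin 4) ℝ),
      (∀ i, (p i).IsHomogeneous 2) ∧
      (X 0 ^ 4 + X 1 ^ 2 * X 2 ^ 2 + X 2 ^ 2 * X 3 ^ 2 + X 3 ^ 2 * X 1 ^ 2
        - 4 * X 0 * X 1 * X 2 * X 3 : MvPolynomial (Fin 4) ℝ) = ∑ i, (p i) ^ 2 := by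
  rintro ⟨r, p, hh, heq⟩
  have hq : ∀ v : Fin 4 → ℝ,
      eval v (X 0 ^ 4 + X 1 ^ 2 * X 2 ^ 2 + X 2 ^ 2 * X 3 ^ 2 + X 3 ^ 2 * X 1 ^ 2
        - 4 * X 0 * X 1 * X 2 * X 3 : MvPolynomial (Fin 4) ℝ) = ∑ i, (eval v (p i))^2 := by
    intro v
    rw [heq, map_sum]
    simp
  have hzero : ∀ (v : Fin 4 → ℝ), (∑ i, (eval v (p i))^2 = 0) → ∀ i, eval v (p i) = 0 := by
    intro v hv i
    have h := (Finset.sum_eq_zero_iff_of_nonneg (fun j _ => sq_nonneg _)).mp hv i (Finset.mem_univ i)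
    exact pow_eq_zero_iff two_ne_zero |>.mp h
  have hP1 : ∀ i, eval ![1,1,1,1] (p i) = 0 := by
    apply hzero; rw [← hq]; norm_num [Matrix.cons_val_two, Matrix.cons_val_three]
  have hP2 : ∀ i, eval ![1,1,-1,-1] (p i) = 0 := by
    apply hzero; rw [← hq]; norm_num [Matrix.cons_val_two, Matrix.cons_val_three]
  have hP3 : ∀ i, eval ![1,-1,1,-1] (p i) = 0 := by
    apply hzero; rw [← hq]; norm_num [Matrix.cons_val_two, Matrix.cons_val_three]
  have hP4 : ∀ i, eval ![1,-1,-1,1] (p i) = 0 := by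
    apply hzero; rw [← hq]; norm_num [Matrix.cons_val_two, Matrix.cons_val_three]
  have hE2 : ∀ i, eval ![0,1,0,0] (p i) = 0 := by
    apply hzero; rw [← hq]; norm_num [Matrix.cons_val_two, Matrix.cons_val_three]
  have hE3 : ∀ i, eval ![0,0,1,0] (p i) = 0 := by
    apply hzero; rw [← hq]; norm_num [Matrix.cons_val_two, Matrix.cons_val_three]
  have hE4 : ∀ i, eval ![0,0,0,1] (p i) = 0 := by
    apply hzero; rw [← hq]; norm_num [Matrix.cons_val_two, Matrix.cons_val_three]
  have ha : ∀ i, eval ![1,0,0,0] (p i) = 0 := by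
    intro i
    have hid := eval_identity (p i) (hh i)
    rw [hP1 i, hP2 i, hP3 i, hP4 i, hE2 i, hE3 i, hE4 i] at hid
    linarith
  have h1 := hq ![1,0,0,0]
  rw [Finset.sum_eq_zero (fun i _ => by rw [ha i]; ring)] at h1
  norm_num [Matrix.cons_val_two, Matrix.cons_val_three] at h1
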